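/- Let 𝒳 = (Ω,S) be a thick coherent configuration and let d be the minimum of d(s) = n_s·n_{s*} over all irreflexive basis relations s. Then every basis relation s with d(s) ≤ d is irredundant, i.e., there are no irreflexive basis relations x, y with s = x·y and ⟨x⟩ ∧ ⟨y⟩ = 1_Ω. -/
import Mathlib


open Set

def rcomp {Ω : Type*} (r s : Set (Ω × Ω)) : Set (Ω × Ω) :=
  {p | ∃ γ, (p.1, γ) ∈ r ∧ (γ, p.2) ∈ s}

def rconv {Ω : Type*} (r : Set (Ω × Ω)) : Set (Ω × Ω) := {p | (p.2, p.1) ∈ r}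

def rdiag (Ω : Type*) : Set (Ω × Ω) := {p | p.1 = p.2}

def IsEquivRel {Ω : Type*} (e : Set (Ω × Ω)) : Prop :=
  Equivalence (fun a b => (a, b) ∈ e)

/-- The smallest equivalence relation containing `r`. -/
def eqvClosure {Ω : Type*} (r : Set (Ω × Ω)) : Set (Ω × Ω) :=
  ⋂₀ {e | IsEquivRel e ∧ r ⊆ e}

/-- Join of two equivalence relations. -/
def rjoin {Ω : Type*} (e f : Set (Ω × Ω)) : Set (Ω × Ω) := eqvClosure (e ∪ f)

def IsClass {Ω : Type*} (e : Set (Ω × Ω)) (Δ : Set Ω) : Prop :=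
  ∃ α, Δ = {β | (α, β) ∈ e}

def setoidRel {Ω : Type*} (e : Setoid Ω) : Set (Ω × Ω) := {p | e.r p.1 p.2}

/-- The relation induced on the quotient `Ω/e` by a relation `r` on `Ω`. -/
def qmap {Ω : Type*} (e : Setoid Ω) (r : Set (Ω × Ω)) :
    Set (Quotient e × Quotient e) :=
  {p | ∃ a b : Ω, Quotient.mk e a = p.1 ∧ Quotient.mk e b = p.2 ∧ (a, b) ∈ r}

/-- Tensor product of relations. -/
def tensorRel {m : ℕ} {Ω : Fin m → Type*} (s : ∀ i, Set (Ω i × Ω i)) :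
    Set ((∀ i, Ω i) × (∀ i, Ω i)) :=
  {p | ∀ i, (p.1 i, p.2 i) ∈ s i}

def tensor2 {Ω₁ Ω₂ : Type*} (s₁ : Set (Ω₁ × Ω₁)) (s₂ : Set (Ω₂ × Ω₂)) :
    Set ((Ω₁ × Ω₂) × (Ω₁ × Ω₂)) :=
  {p | (p.1.1, p.2.1) ∈ s₁ ∧ (p.1.2, p.2.2) ∈ s₂}

/-- `PP e I` is the join of the equivalence relations `e i`, `i ∈ I`. -/
def PP {Ω : Type*} {m : ℕ} (e : Fin m → Set (Ω × Ω)) (I : Set (Fin m)) :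
    Set (Ω × Ω) :=
  eqvClosure (⋃ i ∈ I, e i)

/-- An atomic Cartesian decomposition, given as a family of equivalence relations. -/
def IsACDfam {Ω : Type*} {m : ℕ} (e : Fin m → Set (Ω × Ω)) : Prop :=
  0 < m ∧ (∀ i, IsEquivRel (e i)) ∧ (∀ i, e i ≠ rdiag Ω) ∧
  (∀ i j, rcomp (e i) (e j) = rcomp (e j) (e i)) ∧
  (∀ i, e i ∩ PP e ({i}ᶜ) = rdiag Ω) ∧
  (∀ i, rjoin (e i) (PP e ({i}ᶜ)) = Set.univ)

/-- Join of a set of relations. -/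
def joinAll {Ω : Type*} (B : Set (Set (Ω × Ω))) : Set (Ω × Ω) := eqvClosure (⋃₀ B)

/-- The `P`-complement of `e`: the join of the members of `P` other than `e`. -/
def pcompl {Ω : Type*} (P : Set (Set (Ω × Ω))) (e : Set (Ω × Ω)) : Set (Ω × Ω) :=
  joinAll (P \ {e})

/-- An atomic Cartesian decomposition, given as a set of equivalence relations. -/
def IsACD {Ω : Type*} (P : Set (Set (Ω × Ω))) : Prop :=
  P.Nonempty ∧ (∀ e ∈ P, IsEquivRel e ∧ e ≠ rdiag Ω) ∧
  (∀ e ∈ P, ∀ f ∈ P, rcomp e f = rcomp f e) ∧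
  (∀ e ∈ P, e ∩ pcompl P e = rdiag Ω ∧ rjoin e (pcompl P e) = Set.univ)

def IsPartitionOf {α : Type*} (P : Set α) (C : Set (Set α)) : Prop :=
  (∀ B ∈ C, B.Nonempty) ∧ (∀ B ∈ C, ∀ B' ∈ C, B ≠ B' → Disjoint B B') ∧ ⋃₀ C = P

/-- A coherent configuration on `Ω`. -/
structure CohCfg (Ω : Type*) where
  S : Set (Set (Ω × Ω))
  empty_not_mem : ∅ ∉ S
  cover : ∀ p : Ω × Ω, ∃ s ∈ S, p ∈ s
  pairwise_disjoint : ∀ s ∈ S, ∀ t ∈ S, s ≠ t → Disjoint s t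
  diag_union : ∀ s ∈ S, (s ∩ rdiag Ω).Nonempty → s ⊆ rdiag Ω
  conv_mem : ∀ s ∈ S, rconv s ∈ S
  inter_const : ∀ r ∈ S, ∀ s ∈ S, ∀ t ∈ S, ∀ p ∈ t, ∀ q ∈ t,
    ({γ : Ω | (p.1, γ) ∈ r ∧ (γ, p.2) ∈ s}).ncard
      = ({γ : Ω | (q.1, γ) ∈ r ∧ (γ, q.2) ∈ s}).ncard

/-- The valency of a basis relation (the common size of the rows over the left support). -/
noncomputable def valency {Ω : Type*} (s : Set (Ω × Ω)) : ℕ :=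
  sSup ((fun α => ({β | (α, β) ∈ s} : Set Ω).ncard) '' {α | ∃ β, (α, β) ∈ s})

def IsThick {Ω : Type*} (X : CohCfg Ω) : Prop :=
  ∀ s ∈ X.S, Disjoint s (rdiag Ω) → ¬(valency s = 1 ∧ valency (rconv s) = 1)

def IsParabolic {Ω : Type*} (X : CohCfg Ω) (e : Set (Ω × Ω)) : Prop :=
  IsEquivRel e ∧ ∀ s ∈ X.S, (s ∩ e).Nonempty → s ⊆ e

def Perp {Ω : Type*} (X : CohCfg Ω) (e f : Set (Ω × Ω)) : Prop :=
  ∀ x ∈ X.S, x ⊆ e → ∀ y ∈ X.S, y ⊆ f → (rcomp x y).Nonempty → rcomp x y ∈ X.S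

def Redundant {Ω : Type*} (X : CohCfg Ω) (s : Set (Ω × Ω)) : Prop :=
  ∃ x ∈ X.S, ∃ y ∈ X.S, Disjoint x (rdiag Ω) ∧ Disjoint y (rdiag Ω) ∧
    s = rcomp x y ∧ eqvClosure x ∩ eqvClosure y = rdiag Ω
section Aux

variable {Ω : Type*} [Fintype Ω]

lemma eqvClosure_equiv (r : Set (Ω × Ω)) : IsEquivRel (eqvClosure r) := by
  refine ⟨?_, ?_, ?_⟩
  · intro a
    exact Set.mem_sInter.2 fun e he => he.1.refl a
  · intro a b h
    exact Set.mem_sInter.2 fun e he => he.1.symm (Set.mem_sInter.1 h e he)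
  · intro a b c h1 h2
    exact Set.mem_sInter.2 fun e he =>
      he.1.trans (Set.mem_sInter.1 h1 e he) (Set.mem_sInter.1 h2 e he)

lemma subset_eqvClosure (r : Set (Ω × Ω)) : r ⊆ eqvClosure r := by
  intro p hp
  exact Set.mem_sInter.2 fun e he => he.2 hp

/-- Uniqueness of the intermediate point when `⟨x⟩ ∧ ⟨y⟩ = 1`. -/
lemma uniq_of_closure {x y : Set (Ω × Ω)}
    (hcl : eqvClosure x ∩ eqvClosure y = rdiag Ω) :
    ∀ α β γ γ' : Ω, (α, γ) ∈ x → (γ, β) ∈ y → (α, γ') ∈ x → (γ', β) ∈ y →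
      γ = γ' := by
  intro α β γ γ' h1 h2 h3 h4
  have ex : (γ, γ') ∈ eqvClosure x :=
    (eqvClosure_equiv x).trans
      ((eqvClosure_equiv x).symm (subset_eqvClosure x h1))
      (subset_eqvClosure x h3)
  have ey : (γ, γ') ∈ eqvClosure y :=
    (eqvClosure_equiv y).trans (subset_eqvClosure y h2)
      ((eqvClosure_equiv y).symm (subset_eqvClosure y h4))
  have hmem : (γ, γ') ∈ rdiag Ω := hcl ▸ Set.mem_inter ex ey
  exact hmem

/-- Rows of a basis relation have constant size over any diagonal basis class. -/
lemma row_const (X : CohCfg Ω) {s t : Set (Ω × Ω)} (hs : s ∈ X.S)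
    (ht : t ∈ X.S) {α α' : Ω} (hα : (α, α) ∈ t) (hα' : (α', α') ∈ t) :
    ({β | (α, β) ∈ s}).ncard = ({β | (α', β) ∈ s}).ncard := by
  have h := X.inter_const s hs (rconv s) (X.conv_mem s hs) t ht (α, α) hα
    (α', α') hα'
  have e1 : {γ : Ω | ((α, α).1, γ) ∈ s ∧ (γ, (α, α).2) ∈ rconv s}
      = {β | (α, β) ∈ s} := by
    ext γ; simp [rconv]
  have e2 : {γ : Ω | ((α', α').1, γ) ∈ s ∧ (γ, (α', α').2) ∈ rconv s}
      = {β | (α', β) ∈ s} := by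
    ext γ; simp [rconv]
  rwa [e1, e2] at h

/-- Left points of a basis relation lie in the same diagonal class. -/
lemma same_diag_left (X : CohCfg Ω) {s t : Set (Ω × Ω)} (hs : s ∈ X.S)
    (ht : t ∈ X.S) {α β α' β' : Ω} (hp : (α, β) ∈ s) (hq : (α', β') ∈ s)
    (hαt : (α, α) ∈ t) : (α', α') ∈ t := by
  have htd : t ⊆ rdiag Ω := X.diag_union t ht ⟨(α, α), hαt, rfl⟩
  have h := X.inter_const t ht s hs s hs (α, β) hp (α', β') hq
  have hpos : 0 < ({γ : Ω | ((α, β).1, γ) ∈ t ∧ (γ, (α, β).2) ∈ s}).ncard :=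
    (Set.ncard_pos (Set.toFinite _)).mpr ⟨α, hαt, hp⟩
  rw [h] at hpos
  obtain ⟨γ, hγt, hγs⟩ := (Set.ncard_pos (Set.toFinite _)).1 hpos
  have : α' = γ := htd hγt
  subst this
  exact hγt

/-- Right points of a basis relation lie in the same diagonal class. -/
lemma same_diag_right (X : CohCfg Ω) {s t : Set (Ω × Ω)} (hs : s ∈ X.S)
    (ht : t ∈ X.S) {α β α' β' : Ω} (hp : (α, β) ∈ s) (hq : (α', β') ∈ s)
    (hβt : (β, β) ∈ t) : (β', β') ∈ t := by
  have hp' : (β, α) ∈ rconv s := hp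
  have hq' : (β', α') ∈ rconv s := hq
  exact same_diag_left X (X.conv_mem s hs) ht hp' hq' hβt

/-- The valency equals the row size at any left point. -/
lemma valency_eq_row (X : CohCfg Ω) {s : Set (Ω × Ω)} (hs : s ∈ X.S)
    {α β : Ω} (hαβ : (α, β) ∈ s) :
    valency s = ({β' | (α, β') ∈ s}).ncard := by
  have himg : ((fun a => ({b | (a, b) ∈ s} : Set Ω).ncard) ''
      {a | ∃ b, (a, b) ∈ s}) = {({β' | (α, β') ∈ s}).ncard} := by
    apply Set.eq_singleton_iff_unique_mem.mpr
    constructor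
    · exact ⟨α, ⟨β, hαβ⟩, rfl⟩
    · rintro n ⟨a, ⟨b, hab⟩, rfl⟩
      obtain ⟨t, ht, hat⟩ := X.cover (a, a)
      have hαt : (α, α) ∈ t := same_diag_left X hs ht hab hαβ hat
      exact row_const X hs ht hat hαt
  rw [valency, himg, csSup_singleton]

lemma valency_pos (X : CohCfg Ω) {s : Set (Ω × Ω)} (hs : s ∈ X.S)
    {α β : Ω} (hαβ : (α, β) ∈ s) : 1 ≤ valency s := by
  rw [valency_eq_row X hs hαβ]
  exact (Set.ncard_pos (Set.toFinite _)).mpr ⟨β, hαβ⟩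

/-- Valency is multiplicative for a composition with unique intermediate points. -/
lemma row_mul (X : CohCfg Ω) {x y : Set (Ω × Ω)} (hx : x ∈ X.S) (hy : y ∈ X.S)
    (hU : ∀ α β γ γ' : Ω, (α, γ) ∈ x → (γ, β) ∈ y → (α, γ') ∈ x →
      (γ', β) ∈ y → γ = γ')
    {α₀ γ₀ β₀ : Ω} (h1 : (α₀, γ₀) ∈ x) (h2 : (γ₀, β₀) ∈ y) :
    ({β | (α₀, β) ∈ rcomp x y}).ncard = valency x * valency y := by
  classical
  set A : Finset Ω := {γ | (α₀, γ) ∈ x}.toFinset with hA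
  set B : Ω → Finset Ω := fun γ => {β | (γ, β) ∈ y}.toFinset with hB
  have hset : {β | (α₀, β) ∈ rcomp x y} = ↑(A.biUnion B) := by
    ext β
    simp only [Finset.coe_biUnion, Set.mem_iUnion, Finset.mem_coe, hA, hB,
      Set.mem_toFinset, Set.mem_setOf_eq, rcomp]
    constructor
    · rintro ⟨γ, hγ1, hγ2⟩; exact ⟨γ, hγ1, hγ2⟩
    · rintro ⟨γ, hγ1, hγ2⟩; exact ⟨γ, hγ1, hγ2⟩
  have hdisj : ∀ γ ∈ A, ∀ γ' ∈ A, γ ≠ γ' → Disjoint (B γ) (B γ') := by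
    intro γ hγ γ' hγ' hne
    rw [Finset.disjoint_left]
    intro β hβ hβ'
    exact hne (hU α₀ β γ γ'
      (by simpa [hA, Set.mem_toFinset] using hγ)
      (by simpa [hB, Set.mem_toFinset] using hβ)
      (by simpa [hA, Set.mem_toFinset] using hγ')
      (by simpa [hB, Set.mem_toFinset] using hβ'))
  have hrowy : ∀ γ ∈ A, (B γ).card = valency y := by
    intro γ hγ
    have hγx : (α₀, γ) ∈ x := by simpa [hA, Set.mem_toFinset] using hγ
    obtain ⟨t, ht, hγt⟩ := X.cover (γ, γ)
    have hγ₀t : (γ₀, γ₀) ∈ t := same_diag_right X hx ht hγx h1 hγt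
    have hc : ({β | (γ, β) ∈ y}).ncard = ({β | (γ₀, β) ∈ y}).ncard :=
      row_const X hy ht hγt hγ₀t
    have : (B γ).card = ({β | (γ, β) ∈ y}).ncard :=
      (Set.ncard_eq_toFinset_card' _).symm
    rw [this, hc, ← valency_eq_row X hy h2]
  have hAcard : A.card = valency x := by
    have : A.card = ({γ | (α₀, γ) ∈ x}).ncard :=
      (Set.ncard_eq_toFinset_card' _).symm
    rw [this, ← valency_eq_row X hx h1]
  rw [hset, Set.ncard_coe_finset, Finset.card_biUnion hdisj,
    Finset.sum_congr rfl hrowy, Finset.sum_const, smul_eq_mul, hAcard]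

end Aux

/-- in a thick coherent configuration, every basis relation `s` with
`d(s) ≤ d := min { d(t) : t irreflexive basis relation }` is irredundant. -/
theorem stmt15 {Ω : Type*} [Fintype Ω] (X : CohCfg Ω) (hX : IsThick X)
    (d : ℕ)
    (hd : d = sInf {n | ∃ t ∈ X.S, Disjoint t (rdiag Ω) ∧
      n = valency t * valency (rconv t)}) :
    ∀ s ∈ X.S, valency s * valency (rconv s) ≤ d → ¬ Redundant X s := by
  rintro s hs hle ⟨x, hx, y, hy, hxd, hyd, hsxy, hcl⟩
  subst hsxy
  -- a witness point of s = x ∘ y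
  have hsne : (rcomp x y).Nonempty := by
    rcases Set.eq_empty_or_nonempty (rcomp x y) with h | h
    · exact absurd (h ▸ hs) X.empty_not_mem
    · exact h
  obtain ⟨⟨α₀, β₀⟩, hαβ⟩ := hsne
  obtain ⟨γ₀, hxγ, hyγ⟩ := hαβ
  have hαβ : (α₀, β₀) ∈ rcomp x y := ⟨γ₀, hxγ, hyγ⟩
  -- uniqueness of intermediate points, both ways
  have hU := uniq_of_closure hcl
  have hU' : ∀ α β γ γ' : Ω, (α, γ) ∈ rconv y → (γ, β) ∈ rconv x →
      (α, γ') ∈ rconv y → (γ', β) ∈ rconv x → γ = γ' := by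
    intro α β γ γ' h1 h2 h3 h4
    exact hU β α γ γ' h2 h1 h4 h3
  -- converse of the composition
  have hconv : rconv (rcomp x y) = rcomp (rconv y) (rconv x) := by
    ext ⟨β, α⟩
    constructor
    · rintro ⟨γ, hg1, hg2⟩; exact ⟨γ, hg2, hg1⟩
    · rintro ⟨γ, hg1, hg2⟩; exact ⟨γ, hg2, hg1⟩
  -- multiplicativity of valencies
  have hv1 : valency (rcomp x y) = valency x * valency y := by
    rw [valency_eq_row X hs hαβ]
    exact row_mul X hx hy hU hxγ hyγ
  have hv2 : valency (rconv (rcomp x y))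
      = valency (rconv y) * valency (rconv x) := by
    have hαβ' : (β₀, α₀) ∈ rconv (rcomp x y) := hαβ
    rw [valency_eq_row X (X.conv_mem _ hs) hαβ']
    have hset : {β' | (β₀, β') ∈ rconv (rcomp x y)}
        = {β' | (β₀, β') ∈ rcomp (rconv y) (rconv x)} := by rw [hconv]
    rw [hset]
    exact row_mul X (X.conv_mem y hy) (X.conv_mem x hx) hU'
      (show (β₀, γ₀) ∈ rconv y from hyγ) (show (γ₀, α₀) ∈ rconv x from hxγ)
  -- positivity of all four valencies
  have p1 : 1 ≤ valency x := valency_pos X hx hxγ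
  have p2 : 1 ≤ valency (rconv x) :=
    valency_pos X (X.conv_mem x hx) (show (γ₀, α₀) ∈ rconv x from hxγ)
  have p3 : 1 ≤ valency y := valency_pos X hy hyγ
  have p4 : 1 ≤ valency (rconv y) :=
    valency_pos X (X.conv_mem y hy) (show (β₀, γ₀) ∈ rconv y from hyγ)
  -- thickness : d(x), d(y) ≥ 2
  have hthx : 2 ≤ valency x * valency (rconv x) := by
    have hne : valency x * valency (rconv x) ≠ 1 := by
      intro h
      exact hX x hx hxd ⟨Nat.eq_one_of_mul_eq_one_right h, Nat.eq_one_of_mul_eq_one_left h⟩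
    have hpos : 1 ≤ valency x * valency (rconv x) :=
      Nat.one_le_iff_ne_zero.mpr (by positivity)
    omega
  have hthy : 2 ≤ valency y * valency (rconv y) := by
    have hne : valency y * valency (rconv y) ≠ 1 := by
      intro h
      exact hX y hy hyd ⟨Nat.eq_one_of_mul_eq_one_right h, Nat.eq_one_of_mul_eq_one_left h⟩
    have hpos : 1 ≤ valency y * valency (rconv y) :=
      Nat.one_le_iff_ne_zero.mpr (by positivity)
    omega
  -- minimality : d ≤ d(x)
  have hdx : d ≤ valency x * valency (rconv x) := by
    rw [hd]
    exact Nat.sInf_le ⟨x, hx, hxd, rfl⟩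
  -- the contradiction : d(x)·d(y) ≤ d ≤ d(x) but d(y) ≥ 2
  have hkey : (valency x * valency (rconv x)) * (valency y * valency (rconv y))
      ≤ (valency x * valency (rconv x)) * 1 := by
    calc (valency x * valency (rconv x)) * (valency y * valency (rconv y))
        = valency (rcomp x y) * valency (rconv (rcomp x y)) := by
          rw [hv1, hv2]; ring
      _ ≤ d := hle
      _ ≤ valency x * valency (rconv x) := hdx
      _ = (valency x * valency (rconv x)) * 1 := by ring
  have := Nat.le_of_mul_le_mul_left hkey (by omega)
  omega
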